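/- (Gronwall-type lemma with finitely many discontinuities.) Let 0 ≤ t₀ ≤ t₁ ≤ ⋯ ≤ t_k ≤ 1 and let f : [0,1] → [0,∞) be a Borel measurable integrable function which is continuous on [0,1] \ {t₀, …, t_k}. Suppose there exist a Borel measurable function γ : [0,1] → [0,∞) and a constant β > 0 such that f(t) ≤ γ(t) + β·∫₀ᵗ f(r) dr for all t ∈ [0,1]. Then f(t) ≤ γ(t) + β·∫₀ᵗ γ(r)·e^{β(t−r)} dr for all t ∈ [0,1]. -/

import Mathlib

open MeasureTheory Set intervalIntegral

lemma gwj_aux (n : ℕ) : ∀ (S : Finset ℝ), S.card ≤ n → ∀ (a b : ℝ) (g g' φ : ℝ → ℝ), a ≤ b →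
    ContinuousOn g (Set.Icc a b) → MeasureTheory.IntegrableOn φ (Set.Icc a b) →
    (∀ x ∈ Set.Ioo a b, x ∉ S → HasDerivWithinAt g (g' x) (Set.Ioi x) x) →
    (∀ x ∈ Set.Ioo a b, x ∉ S → g' x ≤ φ x) →
    g b - g a ≤ ∫ y in a..b, φ y := by
  induction n with
  | zero =>
    intro S hS a b g g' φ hab hcont hφ hderiv hle
    have hSe : S = ∅ := Finset.card_eq_zero.1 (Nat.le_zero.1 hS)
    exact intervalIntegral.sub_le_integral_of_hasDeriv_right_of_le hab hcont
      (fun x hx => hderiv x hx (by simp [hSe])) hφ (fun x hx => hle x hx (by simp [hSe]))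
  | succ n ih =>
    intro S hS a b g g' φ hab hcont hφ hderiv hle
    by_cases h : ∃ c ∈ S, c ∈ Set.Ioo a b
    · obtain ⟨c, hcS, hc⟩ := h
      have hcard : (S.erase c).card ≤ n := by
        have := Finset.card_erase_of_mem hcS
        omega
      have hsub1 : Set.Icc a c ⊆ Set.Icc a b := Set.Icc_subset_Icc le_rfl hc.2.le
      have hsub2 : Set.Icc c b ⊆ Set.Icc a b := Set.Icc_subset_Icc hc.1.le le_rfl
      have h1 := ih (S.erase c) hcard a c g g' φ hc.1.le (hcont.mono hsub1) (hφ.mono_set hsub1)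
        (fun x hx hxS => hderiv x ⟨hx.1, hx.2.trans hc.2⟩
          (fun hmem => hxS (Finset.mem_erase.2 ⟨hx.2.ne, hmem⟩)))
        (fun x hx hxS => hle x ⟨hx.1, hx.2.trans hc.2⟩
          (fun hmem => hxS (Finset.mem_erase.2 ⟨hx.2.ne, hmem⟩)))
      have h2 := ih (S.erase c) hcard c b g g' φ hc.2.le (hcont.mono hsub2) (hφ.mono_set hsub2)
        (fun x hx hxS => hderiv x ⟨hc.1.trans hx.1, hx.2⟩
          (fun hmem => hxS (Finset.mem_erase.2 ⟨hx.1.ne', hmem⟩)))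
        (fun x hx hxS => hle x ⟨hc.1.trans hx.1, hx.2⟩
          (fun hmem => hxS (Finset.mem_erase.2 ⟨hx.1.ne', hmem⟩)))
      have hi1 : IntervalIntegrable φ volume a c := by
        rw [intervalIntegrable_iff_integrableOn_Icc_of_le hc.1.le]; exact hφ.mono_set hsub1
      have hi2 : IntervalIntegrable φ volume c b := by
        rw [intervalIntegrable_iff_integrableOn_Icc_of_le hc.2.le]; exact hφ.mono_set hsub2
      have hadd := intervalIntegral.integral_add_adjacent_intervals hi1 hi2
      linarith
    · push_neg at h
      exact intervalIntegral.sub_le_integral_of_hasDeriv_right_of_le hab hcont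
        (fun x hx => hderiv x hx (fun hm => h x hm hx)) hφ
        (fun x hx => hle x hx (fun hm => h x hm hx))

/-- a Gronwall-type lemma for a nonnegative integrable function `f`
on `[0,1]` which is continuous off the finitely many points `ts 0 ≤ ⋯ ≤ ts k`:
if `f t ≤ γ t + β ∫₀ᵗ f` on `[0,1]` for a nonnegative Borel `γ` and `β > 0`, then
`f t ≤ γ t + β ∫₀ᵗ γ r · e^{β (t-r)} dr` (the latter integral taken in `[0,∞]`,
as `γ` need not be integrable). -/
theorem gronwall_with_jumps (k : ℕ) (ts : Fin (k + 1) → ℝ) (hts : Monotone ts)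
    (hts0 : 0 ≤ ts 0) (hts1 : ts (Fin.last k) ≤ 1)
    (f γ : ℝ → ℝ) (hf_meas : Measurable f) (hγ_meas : Measurable γ)
    (hf_int : MeasureTheory.IntegrableOn f (Set.Icc 0 1))
    (hf_nonneg : ∀ t ∈ Set.Icc (0 : ℝ) 1, 0 ≤ f t)
    (hγ_nonneg : ∀ t ∈ Set.Icc (0 : ℝ) 1, 0 ≤ γ t)
    (hf_cont : ContinuousOn f (Set.Icc 0 1 \ Set.range ts))
    (β : ℝ) (hβ : 0 < β)
    (hineq : ∀ t ∈ Set.Icc (0 : ℝ) 1, f t ≤ γ t + β * ∫ r in (0 : ℝ)..t, f r) :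
    ∀ t ∈ Set.Icc (0 : ℝ) 1,
      ENNReal.ofReal (f t) ≤ ENNReal.ofReal (γ t) +
        ENNReal.ofReal β *
          ∫⁻ r in Set.Ioc (0 : ℝ) t, ENNReal.ofReal (γ r * Real.exp (β * (t - r))) := by
  intro t ht
  obtain ⟨ht0, ht1⟩ := ht
  set I := ∫⁻ r in Set.Ioc (0 : ℝ) t, ENNReal.ofReal (γ r * Real.exp (β * (t - r))) with hIdef
  by_cases hI : I = ⊤
  · rw [hI, ENNReal.mul_top (by simpa using (ENNReal.ofReal_pos.2 hβ).ne')]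
    simp
  -- the finite case
  have hIocsub : Set.Ioc (0 : ℝ) t ⊆ Set.Icc 0 1 := fun r hr => ⟨hr.1.le, hr.2.trans ht1⟩
  have hexp1 : ∀ r ∈ Set.Ioc (0 : ℝ) t, 1 ≤ Real.exp (β * (t - r)) := fun r hr =>
    Real.one_le_exp (mul_nonneg hβ.le (sub_nonneg.2 hr.2))
  have hγnn_ae : 0 ≤ᵐ[volume.restrict (Set.Ioc (0 : ℝ) t)] γ :=
    MeasureTheory.ae_restrict_of_forall_mem measurableSet_Ioc
      fun r hr => hγ_nonneg r (hIocsub hr)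
  have hγint : MeasureTheory.IntegrableOn γ (Set.Ioc 0 t) := by
    refine ⟨hγ_meas.aestronglyMeasurable, ?_⟩
    rw [MeasureTheory.hasFiniteIntegral_iff_ofReal hγnn_ae]
    refine lt_of_le_of_lt ?_ (lt_top_iff_ne_top.2 hI)
    refine MeasureTheory.lintegral_mono_ae ?_
    rw [MeasureTheory.ae_restrict_iff' measurableSet_Ioc]
    refine Filter.Eventually.of_forall fun r hr => ENNReal.ofReal_le_ofReal ?_
    exact le_mul_of_one_le_right (hγ_nonneg r (hIocsub hr)) (hexp1 r hr)
  have hγIcc : MeasureTheory.IntegrableOn γ (Set.Icc 0 t) :=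
    (integrableOn_Icc_iff_integrableOn_Ioc (by simp)).2 hγint
  -- primitive
  set u : ℝ → ℝ := fun s => ∫ r in (0 : ℝ)..s, f r with hudef
  have hfIcc : MeasureTheory.IntegrableOn f (Set.Icc 0 t) :=
    hf_int.mono_set (Set.Icc_subset_Icc le_rfl ht1)
  have hu_cont : ContinuousOn u (Set.Icc 0 t) := by
    have := intervalIntegral.continuousOn_primitive_interval
      (μ := volume) (a := (0 : ℝ)) (b := t) (f := f) (by rwa [Set.uIcc_of_le ht0])
    rwa [Set.uIcc_of_le ht0] at this
  set w : ℝ → ℝ := fun s => Real.exp (-β * s) * u s with hwdef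
  set g' : ℝ → ℝ := fun s => Real.exp (-β * s) * (-β) * u s + Real.exp (-β * s) * f s
    with hg'def
  set φ : ℝ → ℝ := fun s => Real.exp (-β * s) * γ s with hφdef
  set S : Finset ℝ := (Set.finite_range ts).toFinset with hSdef
  -- continuity of w
  have hw_cont : ContinuousOn w (Set.Icc 0 t) :=
    ((Real.continuous_exp.comp (continuous_const.mul continuous_id)).continuousOn).mul hu_cont
  -- integrability of φ
  have hφ_int : MeasureTheory.IntegrableOn φ (Set.Icc 0 t) := by
    refine MeasureTheory.Integrable.bdd_mul (c := 1) hγIcc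
      ((Real.continuous_exp.comp (continuous_const.mul continuous_id)).aestronglyMeasurable) ?_
    rw [MeasureTheory.ae_restrict_iff' measurableSet_Icc]
    refine Filter.Eventually.of_forall fun s hs => ?_
    rw [Real.norm_eq_abs, abs_of_pos (Real.exp_pos _)]
    exact Real.exp_le_one_iff.2 (by nlinarith [hs.1] : -β * s ≤ 0)
  -- derivative
  have hderiv : ∀ s ∈ Set.Ioo (0 : ℝ) t, s ∉ S → HasDerivWithinAt w (g' s) (Set.Ioi s) s := by
    intro s hs hsS
    have hs01 : s ∈ Set.Ioo (0 : ℝ) 1 := ⟨hs.1, lt_of_lt_of_le hs.2 ht1⟩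
    have hsnr : s ∉ Set.range ts := by
      rwa [hSdef, Set.Finite.mem_toFinset] at hsS
    have hfi : IntervalIntegrable f volume 0 s := by
      rw [intervalIntegrable_iff_integrableOn_Icc_of_le hs.1.le]
      exact hf_int.mono_set (Set.Icc_subset_Icc le_rfl hs01.2.le)
    have hcontat : ContinuousAt f s := by
      have hopen : IsOpen (Set.Ioo (0 : ℝ) 1 \ Set.range ts) :=
        isOpen_Ioo.sdiff (Set.finite_range ts).isClosed
      refine hf_cont.continuousAt (Filter.mem_of_superset (hopen.mem_nhds ⟨hs01, hsnr⟩) ?_)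
      exact Set.diff_subset_diff_left Set.Ioo_subset_Icc_self
    have hder_u : HasDerivAt u (f s) s :=
      intervalIntegral.integral_hasDerivAt_right hfi
        hf_meas.stronglyMeasurable.stronglyMeasurableAtFilter hcontat
    have h0 : HasDerivAt (fun x : ℝ => -β * x) (-β) s := by
      simpa using (hasDerivAt_id s).const_mul (-β)
    have hder_e : HasDerivAt (fun x => Real.exp (-β * x)) (Real.exp (-β * s) * (-β)) s := h0.exp
    exact (hder_e.mul hder_u).hasDerivWithinAt
  -- derivative bound
  have hbound : ∀ s ∈ Set.Ioo (0 : ℝ) t, s ∉ S → g' s ≤ φ s := by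
    intro s hs _
    have hsIcc : s ∈ Set.Icc (0 : ℝ) 1 := ⟨hs.1.le, hs.2.le.trans ht1⟩
    have hfs : f s ≤ γ s + β * u s := hineq s hsIcc
    have hepos : (0 : ℝ) < Real.exp (-β * s) := Real.exp_pos _
    show Real.exp (-β * s) * (-β) * u s + Real.exp (-β * s) * f s ≤ Real.exp (-β * s) * γ s
    nlinarith [mul_le_mul_of_nonneg_left hfs hepos.le]
  -- apply the auxiliary lemma
  have hkey := gwj_aux S.card S le_rfl 0 t w g' φ ht0 hw_cont hφ_int hderiv hbound
  have hw0 : w 0 = 0 := by simp [hwdef, hudef]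
  rw [hw0, sub_zero] at hkey
  -- deduce the bound on u t
  set J := ∫ r in (0 : ℝ)..t, γ r * Real.exp (β * (t - r)) with hJdef
  have hJeq : J = Real.exp (β * t) * ∫ y in (0 : ℝ)..t, φ y := by
    rw [hJdef, ← intervalIntegral.integral_const_mul]
    refine intervalIntegral.integral_congr fun s _ => ?_
    rw [hφdef]
    show γ s * Real.exp (β * (t - s)) = Real.exp (β * t) * (Real.exp (-β * s) * γ s)
    rw [← mul_assoc, ← Real.exp_add]
    ring_nf
  have hut : u t ≤ J := by
    have h1 : Real.exp (-β * t) * u t ≤ ∫ y in (0 : ℝ)..t, φ y := hkey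
    have h2 := mul_le_mul_of_nonneg_left h1 (Real.exp_pos (β * t)).le
    rw [← mul_assoc, ← Real.exp_add] at h2
    simp only [add_neg_cancel, neg_mul] at h2
    rw [hJeq]
    calc u t = Real.exp 0 * u t := by simp
    _ ≤ Real.exp (β * t) * ∫ y in (0 : ℝ)..t, φ y := h2
  have hft : f t ≤ γ t + β * J :=
    le_trans (hineq t ⟨ht0, ht1⟩) (by nlinarith)
  -- integrability and nonnegativity of J's integrand
  have hJint : MeasureTheory.IntegrableOn (fun r => γ r * Real.exp (β * (t - r)))
      (Set.Ioc 0 t) := by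
    refine MeasureTheory.Integrable.congr (f := fun r => Real.exp (β * (t - r)) * γ r)
      ?_ (Filter.Eventually.of_forall fun r => mul_comm _ _)
    refine MeasureTheory.Integrable.bdd_mul (c := Real.exp (β * t)) hγint
      ((Real.continuous_exp.comp (by continuity)).aestronglyMeasurable) ?_
    rw [MeasureTheory.ae_restrict_iff' measurableSet_Ioc]
    refine Filter.Eventually.of_forall fun s hs => ?_
    rw [Real.norm_eq_abs, abs_of_pos (Real.exp_pos _)]
    exact Real.exp_le_exp.2 (by nlinarith [hs.1])
  have hJnn_ae : 0 ≤ᵐ[volume.restrict (Set.Ioc (0 : ℝ) t)]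
      fun r => γ r * Real.exp (β * (t - r)) :=
    MeasureTheory.ae_restrict_of_forall_mem measurableSet_Ioc fun r hr =>
      mul_nonneg (hγ_nonneg r (hIocsub hr)) (Real.exp_pos _).le
  have hJset : J = ∫ r in Set.Ioc (0 : ℝ) t, γ r * Real.exp (β * (t - r)) := by
    rw [hJdef, intervalIntegral.integral_of_le ht0]
  have hJnn : 0 ≤ J := by
    rw [hJset]
    exact MeasureTheory.integral_nonneg_of_ae hJnn_ae
  have hofJ : ENNReal.ofReal J = I := by
    rw [hJset, hIdef]
    exact MeasureTheory.ofReal_integral_eq_lintegral_ofReal hJint hJnn_ae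
  calc ENNReal.ofReal (f t) ≤ ENNReal.ofReal (γ t + β * J) := ENNReal.ofReal_le_ofReal hft
  _ = ENNReal.ofReal (γ t) + ENNReal.ofReal (β * J) :=
      ENNReal.ofReal_add (hγ_nonneg t ⟨ht0, ht1⟩) (mul_nonneg hβ.le hJnn)
  _ = ENNReal.ofReal (γ t) + ENNReal.ofReal β * ENNReal.ofReal J := by
      rw [ENNReal.ofReal_mul hβ.le]
  _ = ENNReal.ofReal (γ t) + ENNReal.ofReal β * I := by rw [hofJ]
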